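/- (Time reversal of perfect blocks) Let (z^1,…,z^n) be a word over 𝒞 ∪ 𝒮 that is a perfect block, i.e. its FCFS directed matching matches every customer entry to a server entry within the word. Let (z̃^1,…,z̃^n) be its exchange transformation: if z^k = c was matched to z^l = s (k < l) then z̃^k = s and z̃^l = c, and unmatched server entries are unchanged. Then the reversed word (z̃^n, z̃^{n−1},…,z̃^1) is also a perfect block, and its FCFS directed matching consists exactly of the original matched pairs with positions exchanged and order reversed: whenever z^k was matched to z^l (k < l) in the original word, the customer entry z̃^l is matched to the server entry z̃^k in the reversed word. -/

import Mathlib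

/-- FCFS directed matching of a finite word, scanning left to right.
`fcfsAux R rest n q` processes the remaining word `rest`, where `n` is the position of
the first entry of `rest` in the whole word, and `q` is the ordered queue of
still-unmatched customer entries (position, type) seen so far.  A server entry is matched
to the earliest unmatched compatible customer before it, if any; the output is the list
of matched pairs of positions `(customer position, server position)`. -/
def fcfsAux {C S : Type*} (R : C → S → Prop) [∀ c s, Decidable (R c s)] :
    List (C ⊕ S) → ℕ → List (ℕ × C) → List (ℕ × ℕ)
  | [], _, _ => []
  | Sum.inl c :: rest, n, q => fcfsAux R rest (n + 1) (q ++ [(n, c)])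
  | Sum.inr s :: rest, n, q =>
      match q.find? (fun p => decide (R p.2 s)) with
      | some p => (p.1, n) :: fcfsAux R rest (n + 1) (q.eraseP (fun p' => decide (R p'.2 s)))
      | none => fcfsAux R rest (n + 1) q

/-- The matched pairs of positions of the FCFS directed matching of the word `w`. -/
def fcfsMatching {C S : Type*} (R : C → S → Prop) [∀ c s, Decidable (R c s)]
    (w : List (C ⊕ S)) : List (ℕ × ℕ) := fcfsAux R w 0 []

/-- Number of customer entries of a word. -/
def numC {C S : Type*} (w : List (C ⊕ S)) : ℕ := w.countP (fun z => z.isLeft)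

/-- Number of server entries of a word. -/
def numS {C S : Type*} (w : List (C ⊕ S)) : ℕ := w.countP (fun z => z.isRight)

/-- Number of customer entries left unmatched by the FCFS directed matching. -/
def unmatchedC {C S : Type*} (R : C → S → Prop) [∀ c s, Decidable (R c s)]
    (w : List (C ⊕ S)) : ℕ := numC w - (fcfsMatching R w).length

/-- Number of server entries left unmatched by the FCFS directed matching. -/
def unmatchedS {C S : Type*} (R : C → S → Prop) [∀ c s, Decidable (R c s)]
    (w : List (C ⊕ S)) : ℕ := numS w - (fcfsMatching R w).length

/-- A word is a perfect block if its FCFS directed matching matches every customer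
entry. -/
def IsPerfect {C S : Type*} (R : C → S → Prop) [∀ c s, Decidable (R c s)]
    (w : List (C ⊕ S)) : Prop := (fcfsMatching R w).length = numC w

/-- The exchange transformation: the entries of each matched pair of the FCFS directed
matching are swapped, and unmatched entries are unchanged. -/
def exchange {C S : Type*} (R : C → S → Prop) [∀ c s, Decidable (R c s)] [Inhabited C]
    (w : List (C ⊕ S)) : List (C ⊕ S) :=
  (List.range w.length).map fun k =>
    match (fcfsMatching R w).find? (fun p => p.1 == k) with
    | some p => w.getD p.2 (Sum.inl default)
    | none =>
      match (fcfsMatching R w).find? (fun p => p.2 == k) with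
      | some p => w.getD p.1 (Sum.inl default)
      | none => w.getD k (Sum.inl default)


section Stmt11Aux
set_option linter.unusedSectionVars false


theorem find?_split' {α : Type*} (p : α → Bool) : ∀ {l : List α} {a : α}, l.find? p = some a →
    ∃ l₁ l₂, l = l₁ ++ a :: l₂ ∧ (∀ b ∈ l₁, ¬ p b = true) ∧ l.eraseP p = l₁ ++ l₂ := by
  intro l
  induction l with
  | nil => intro a h; simp at h
  | cons x l ih =>
    intro a h
    by_cases hx : p x
    · rw [List.find?_cons_of_pos hx] at h
      cases h
      exact ⟨[], l, by simp, by simp, by simp [List.eraseP_cons_of_pos, hx]⟩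
    · rw [List.find?_cons_of_neg (p := p) (a := x) (by simpa using hx)] at h
      obtain ⟨l₁, l₂, h1, h2, h3⟩ := ih h
      exact ⟨x :: l₁, l₂, by simp [h1], by simpa [hx] using h2,
        by simp [List.eraseP_cons_of_neg, hx, h3]⟩

theorem find?_unique' {α : Type*} (p : α → Bool) {l : List α} {a : α} (ha : a ∈ l)
    (hpa : p a = true) (hu : ∀ b ∈ l, p b = true → b = a) : l.find? p = some a := by
  induction l with
  | nil => simp at ha
  | cons x l ih =>
    by_cases hx : p x
    · rw [List.find?_cons_of_pos hx]
      rw [hu x (by simp) hx]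
    · rw [List.find?_cons_of_neg (p := p) (a := x) (by simpa using hx)]
      rcases List.mem_cons.1 ha with rfl | ha
      · exact absurd hpa hx
      · exact ih ha (fun b hb => hu b (by simp [hb]))

variable {C S : Type*} (R : C → S → Prop) [∀ c s, Decidable (R c s)]

theorem server_step (s : S) {q : List (ℕ × C)} {p0 : ℕ × C}
    (H2 : q.Pairwise (fun a b => a.1 < b.1))
    (hf : q.find? (fun p => decide (R p.2 s)) = some p0) :
    p0 ∈ q ∧ R p0.2 s ∧
    (∀ b ∈ q.eraseP (fun p => decide (R p.2 s)), b ∈ q) ∧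
    (∀ b ∈ q, b ≠ p0 → b ∈ q.eraseP (fun p => decide (R p.2 s))) ∧
    (q.eraseP (fun p => decide (R p.2 s))).Pairwise (fun a b => a.1 < b.1) ∧
    (∀ b ∈ q, b.1 < p0.1 → ¬ R b.2 s) ∧
    (∀ b ∈ q.eraseP (fun p => decide (R p.2 s)), b.1 ≠ p0.1) ∧
    (q.eraseP (fun p => decide (R p.2 s))).length + 1 = q.length := by
  obtain ⟨l₁, l₂, hq, hl₁, her⟩ := find?_split' _ hf
  have hp0R : R p0.2 s := by simpa using List.find?_some hf
  have hpq := hq ▸ H2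
  rw [List.pairwise_append] at hpq
  obtain ⟨hpl₁, hpl₂, hcross⟩ := hpq
  refine ⟨by simp [hq], hp0R, ?_, ?_, ?_, ?_, ?_, ?_⟩
  · intro b hb; rw [her] at hb; rw [hq]
    rcases List.mem_append.1 hb with h | h
    · exact List.mem_append.2 (Or.inl h)
    · exact List.mem_append.2 (Or.inr (List.mem_cons_of_mem _ h))
  · intro b hb hbne; rw [hq] at hb; rw [her]
    rcases List.mem_append.1 hb with h | h
    · exact List.mem_append.2 (Or.inl h)
    · rcases List.mem_cons.1 h with h | h
      · exact absurd h hbne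
      · exact List.mem_append.2 (Or.inr h)
  · rw [her, List.pairwise_append]
    exact ⟨hpl₁, hpl₂.tail, fun a ha b hb => hcross a ha b (List.mem_cons_of_mem _ hb)⟩
  · intro b hb hblt
    rw [hq] at hb
    rcases List.mem_append.1 hb with h | h
    · simpa using hl₁ b h
    · rcases List.mem_cons.1 h with rfl | h
      · omega
      · exact absurd ((List.pairwise_cons.1 hpl₂).1 b h) (by omega)
  · intro b hb
    rw [her] at hb
    rcases List.mem_append.1 hb with h | h
    · exact Nat.ne_of_lt (hcross b h p0 List.mem_cons_self)
    · exact Nat.ne_of_gt ((List.pairwise_cons.1 hpl₂).1 b h)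
  · rw [her, hq]; simp; omega

theorem pairwise_fst_inj {α β : Type*} {l : List (α × β)}
    (h : l.Pairwise (fun a b => a.1 ≠ b.1)) :
    ∀ a ∈ l, ∀ b ∈ l, a.1 = b.1 → a = b := by
  intro a ha b hb hab
  by_contra hne
  exact (haveI : Std.Symm (fun a b : α × β => a.1 ≠ b.1) := ⟨fun _ _ h => Ne.symm h⟩
    h.forall ha hb hne) hab

theorem pairwise_snd_inj {α β : Type*} {l : List (β × α)}
    (h : l.Pairwise (fun a b => a.2 ≠ b.2)) :
    ∀ a ∈ l, ∀ b ∈ l, a.2 = b.2 → a = b := by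
  intro a ha b hb hab
  by_contra hne
  exact (haveI : Std.Symm (fun a b : β × α => a.2 ≠ b.2) := ⟨fun _ _ h => Ne.symm h⟩
    h.forall ha hb hne) hab

theorem fcfs_le : ∀ (rest : List (C ⊕ S)) (n : ℕ) (q : List (ℕ × C)),
    ∀ p ∈ fcfsAux R rest n q, n ≤ p.2 := by
  intro rest
  induction rest with
  | nil => intro n q p hp; simp [fcfsAux] at hp
  | cons x rest ih =>
    intro n q p hp
    cases x with
    | inl c =>
      rw [fcfsAux] at hp
      exact le_trans (by omega) (ih (n+1) _ p hp)
    | inr s =>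
      rw [fcfsAux] at hp
      cases hf : q.find? (fun p => decide (R p.2 s)) with
      | some p0 =>
        rw [hf] at hp
        simp only [List.mem_cons] at hp
        rcases hp with rfl | hp
        · simp
        · exact le_trans (by omega) (ih (n+1) _ p hp)
      | none =>
        rw [hf] at hp
        exact le_trans (by omega) (ih (n+1) _ p hp)

def Avail (w : List (C ⊕ S)) (n : ℕ) (q : List (ℕ × C)) (k : ℕ) (c : C) : Prop :=
  (k, c) ∈ q ∨ (n ≤ k ∧ w[k]? = some (Sum.inl c))

variable {w : List (C ⊕ S)}

theorem avail_cons_customer {n : ℕ} {q : List (ℕ × C)} {c0 : C}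
    (hn : w[n]? = some (Sum.inl c0)) {k : ℕ} {c : C} :
    Avail w n q k c ↔ Avail w (n+1) (q ++ [(n, c0)]) k c := by
  unfold Avail
  constructor
  · rintro (h | ⟨hk, hw⟩)
    · exact Or.inl (List.mem_append.2 (Or.inl h))
    · rcases Nat.eq_or_lt_of_le hk with rfl | hk'
      · have : c = c0 := by rw [hn] at hw; simpa using hw.symm
        subst this
        exact Or.inl (List.mem_append.2 (Or.inr (by simp)))
      · exact Or.inr ⟨hk', hw⟩
  · rintro (h | ⟨hk, hw⟩)
    · rcases List.mem_append.1 h with h | h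
      · exact Or.inl h
      · simp at h
        exact Or.inr ⟨le_of_eq h.1.symm, by rw [h.1, hn, h.2]⟩
    · exact Or.inr ⟨by omega, hw⟩

theorem avail_server_found {n : ℕ} {q q' : List (ℕ × C)} {s : S} {p0 : ℕ × C}
    (hn : w[n]? = some (Sum.inr s))
    (hsub : ∀ b ∈ q', b ∈ q) (hsub' : ∀ b ∈ q, b ≠ p0 → b ∈ q') (hp0 : p0 ∈ q)
    {k : ℕ} {c : C} :
    Avail w n q k c ↔ ((k, c) = p0 ∨ Avail w (n+1) q' k c) := by
  unfold Avail
  constructor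
  · rintro (h | ⟨hk, hw⟩)
    · by_cases he : (k, c) = p0
      · exact Or.inl he
      · exact Or.inr (Or.inl (hsub' _ h he))
    · rcases Nat.eq_or_lt_of_le hk with rfl | hk'
      · rw [hn] at hw; simp at hw
      · exact Or.inr (Or.inr ⟨hk', hw⟩)
  · rintro (rfl | h | ⟨hk, hw⟩)
    · exact Or.inl hp0
    · exact Or.inl (hsub _ h)
    · exact Or.inr ⟨by omega, hw⟩

theorem avail_server_none {n : ℕ} {q : List (ℕ × C)} {s : S}
    (hn : w[n]? = some (Sum.inr s)) {k : ℕ} {c : C} :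
    Avail w n q k c ↔ Avail w (n+1) q k c := by
  unfold Avail
  constructor
  · rintro (h | ⟨hk, hw⟩)
    · exact Or.inl h
    · rcases Nat.eq_or_lt_of_le hk with rfl | hk'
      · rw [hn] at hw; simp at hw
      · exact Or.inr ⟨hk', hw⟩
  · rintro (h | ⟨hk, hw⟩)
    · exact Or.inl h
    · exact Or.inr ⟨by omega, hw⟩

theorem hrest_shift {rest : List (C ⊕ S)} {x : C ⊕ S} {n : ℕ}
    (hrest : ∀ i, (x :: rest)[i]? = w[n+i]?) :
    (w[n]? = some x) ∧ (∀ i, rest[i]? = w[(n+1)+i]?) := by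
  constructor
  · have := hrest 0; simpa using this.symm
  · intro i
    have := hrest (i+1)
    simp only [List.getElem?_cons_succ] at this
    rw [this]; congr 1; omega

theorem h1_cons_customer {n : ℕ} {q : List (ℕ × C)} {c0 : C}
    (hn : w[n]? = some (Sum.inl c0))
    (H1 : ∀ p ∈ q, p.1 < n ∧ w[p.1]? = some (Sum.inl p.2)) :
    ∀ p ∈ q ++ [(n, c0)], p.1 < n + 1 ∧ w[p.1]? = some (Sum.inl p.2) := by
  intro p hp
  rcases List.mem_append.1 hp with h | h
  · exact ⟨by have := (H1 p h).1; omega, (H1 p h).2⟩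
  · simp at h; subst h; exact ⟨by omega, hn⟩

theorem h2_cons_customer {n : ℕ} {q : List (ℕ × C)} {c0 : C}
    (H1 : ∀ p ∈ q, p.1 < n ∧ w[p.1]? = some (Sum.inl p.2))
    (H2 : q.Pairwise (fun a b => a.1 < b.1)) :
    (q ++ [(n, c0)]).Pairwise (fun a b => a.1 < b.1) := by
  rw [List.pairwise_append]
  exact ⟨H2, List.pairwise_singleton _ _, fun a ha b hb => by
    simp at hb; rw [hb]; exact (H1 a ha).1⟩

theorem fcfs_valid : ∀ (rest : List (C ⊕ S)) (n : ℕ) (q : List (ℕ × C)),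
    (∀ i, rest[i]? = w[n+i]?) →
    (∀ p ∈ q, p.1 < n ∧ w[p.1]? = some (Sum.inl p.2)) →
    q.Pairwise (fun a b => a.1 < b.1) →
    ∀ p ∈ fcfsAux R rest n q, p.1 < p.2 ∧
      ∃ c s, w[p.1]? = some (Sum.inl c) ∧ w[p.2]? = some (Sum.inr s) ∧ R c s ∧
        Avail w n q p.1 c := by
  intro rest
  induction rest with
  | nil => intro n q _ _ _ p hp; simp [fcfsAux] at hp
  | cons x rest ih =>
    intro n q hrest H1 H2 p hp
    obtain ⟨hn, hrest'⟩ := hrest_shift hrest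
    cases x with
    | inl c0 =>
      rw [fcfsAux] at hp
      obtain ⟨h1, c, s, h2, h3, h4, h5⟩ :=
        ih (n+1) _ hrest' (h1_cons_customer hn H1) (h2_cons_customer H1 H2) p hp
      exact ⟨h1, c, s, h2, h3, h4, (avail_cons_customer hn).2 h5⟩
    | inr s0 =>
      rw [fcfsAux] at hp
      cases hf : q.find? (fun p => decide (R p.2 s0)) with
      | some p0 =>
        obtain ⟨hs1, hs2, hs3, hs4, hs5, hs6, hs7, hs8⟩ := server_step R s0 H2 hf
        have H1' : ∀ p ∈ q.eraseP (fun p' => decide (R p'.2 s0)),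
            p.1 < n + 1 ∧ w[p.1]? = some (Sum.inl p.2) := by
          intro p hp
          exact ⟨by have := (H1 p (hs3 p hp)).1; omega, (H1 p (hs3 p hp)).2⟩
        rw [hf] at hp
        simp only [List.mem_cons] at hp
        rcases hp with rfl | hp
        · refine ⟨(H1 p0 hs1).1, p0.2, s0, (H1 p0 hs1).2, hn, hs2, Or.inl (by simpa using hs1)⟩
        · obtain ⟨h1, c, s, h2, h3, h4, h5⟩ := ih (n+1) _ hrest' H1' hs5 p hp
          exact ⟨h1, c, s, h2, h3, h4,
            (avail_server_found hn hs3 hs4 hs1).2 (Or.inr h5)⟩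
      | none =>
        rw [hf] at hp
        obtain ⟨h1, c, s, h2, h3, h4, h5⟩ := ih (n+1) _ hrest'
          (fun p hp => ⟨by have := (H1 p hp).1; omega, (H1 p hp).2⟩) H2 p hp
        exact ⟨h1, c, s, h2, h3, h4, (avail_server_none hn).2 h5⟩

theorem fcfs_pairwise_snd : ∀ (rest : List (C ⊕ S)) (n : ℕ) (q : List (ℕ × C)),
    (fcfsAux R rest n q).Pairwise (fun a b => a.2 < b.2) := by
  intro rest
  induction rest with
  | nil => intro n q; simp [fcfsAux]
  | cons x rest ih =>
    intro n q
    cases x with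
    | inl c0 => rw [fcfsAux]; exact ih (n+1) _
    | inr s0 =>
      rw [fcfsAux]
      cases hf : q.find? (fun p => decide (R p.2 s0)) with
      | some p0 =>
        refine List.pairwise_cons.2 ⟨fun p hp => ?_, ih (n+1) _⟩
        have := fcfs_le R rest (n+1) _ p hp
        simpa using by omega
      | none => exact ih (n+1) _

theorem fcfs_pairwise_fst : ∀ (rest : List (C ⊕ S)) (n : ℕ) (q : List (ℕ × C)),
    (∀ i, rest[i]? = w[n+i]?) →
    (∀ p ∈ q, p.1 < n ∧ w[p.1]? = some (Sum.inl p.2)) →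
    q.Pairwise (fun a b => a.1 < b.1) →
    (fcfsAux R rest n q).Pairwise (fun a b => a.1 ≠ b.1) := by
  intro rest
  induction rest with
  | nil => intro n q _ _ _; simp [fcfsAux]
  | cons x rest ih =>
    intro n q hrest H1 H2
    obtain ⟨hn, hrest'⟩ := hrest_shift hrest
    cases x with
    | inl c0 =>
      rw [fcfsAux]
      exact ih (n+1) _ hrest' (h1_cons_customer hn H1) (h2_cons_customer H1 H2)
    | inr s0 =>
      rw [fcfsAux]
      cases hf : q.find? (fun p => decide (R p.2 s0)) with
      | some p0 =>
        obtain ⟨hs1, hs2, hs3, hs4, hs5, hs6, hs7, hs8⟩ := server_step R s0 H2 hf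
        have H1' : ∀ p ∈ q.eraseP (fun p' => decide (R p'.2 s0)),
            p.1 < n + 1 ∧ w[p.1]? = some (Sum.inl p.2) := by
          intro p hp
          exact ⟨by have := (H1 p (hs3 p hp)).1; omega, (H1 p (hs3 p hp)).2⟩
        refine List.pairwise_cons.2 ⟨fun p hp => ?_, ih (n+1) _ hrest' H1' hs5⟩
        obtain ⟨_, c, s, _, _, _, h5⟩ := fcfs_valid R rest (n+1) _ hrest' H1' hs5 p hp
        rcases h5 with h | ⟨hk, _⟩
        · exact fun he => hs7 _ h (by rw [← he])
        · have := (H1 p0 hs1).1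
          omega
      | none =>
        exact ih (n+1) _ hrest'
          (fun p hp => ⟨by have := (H1 p hp).1; omega, (H1 p hp).2⟩) H2

theorem fcfs_greedy1 : ∀ (rest : List (C ⊕ S)) (n : ℕ) (q : List (ℕ × C)),
    (∀ i, rest[i]? = w[n+i]?) →
    (∀ p ∈ q, p.1 < n ∧ w[p.1]? = some (Sum.inl p.2)) →
    q.Pairwise (fun a b => a.1 < b.1) →
    ∀ p ∈ fcfsAux R rest n q, ∀ k c s, k < p.1 →
      Avail w n q k c → w[p.2]? = some (Sum.inr s) → R c s →
      ∃ p' ∈ fcfsAux R rest n q, p'.1 = k ∧ p'.2 < p.2 := by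
  intro rest
  induction rest with
  | nil => intro n q _ _ _ p hp; simp [fcfsAux] at hp
  | cons x rest ih =>
    intro n q hrest H1 H2 p hp k c s hk hav hws hR
    obtain ⟨hn, hrest'⟩ := hrest_shift hrest
    cases x with
    | inl c0 =>
      rw [fcfsAux] at hp ⊢
      exact ih (n+1) _ hrest' (h1_cons_customer hn H1) (h2_cons_customer H1 H2) p hp
        k c s hk ((avail_cons_customer hn).1 hav) hws hR
    | inr s0 =>
      rw [fcfsAux] at hp ⊢
      cases hf : q.find? (fun p => decide (R p.2 s0)) with
      | some p0 =>
        obtain ⟨hs1, hs2, hs3, hs4, hs5, hs6, hs7, hs8⟩ := server_step R s0 H2 hf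
        have H1' : ∀ p ∈ q.eraseP (fun p' => decide (R p'.2 s0)),
            p.1 < n + 1 ∧ w[p.1]? = some (Sum.inl p.2) := by
          intro p hp
          exact ⟨by have := (H1 p (hs3 p hp)).1; omega, (H1 p (hs3 p hp)).2⟩
        rw [hf] at hp
        simp only [List.mem_cons] at hp
        rcases hp with rfl | hp
        · -- p = (p0.1, n); contradiction: queue entry before p0 compatible
          exfalso
          have hs : s = s0 := by
            have : w[n]? = some (Sum.inr s) := hws
            rw [hn] at this
            simpa using this.symm
          subst hs
          have hkn : k < p0.1 := hk
          have hp0n : p0.1 < n := (H1 p0 hs1).1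
          rcases hav with hmem | ⟨hge, _⟩
          · exact hs6 _ hmem hkn hR
          · omega
        · rcases (avail_server_found hn hs3 hs4 hs1).1 hav with he | hav'
          · refine ⟨(p0.1, n), by simp, by rw [← he], ?_⟩
            have := fcfs_le R rest (n+1) _ p hp
            omega
          · obtain ⟨p', hp', h1, h2⟩ := ih (n+1) _ hrest' H1' hs5 p hp k c s hk hav' hws hR
            exact ⟨p', List.mem_cons_of_mem _ hp', h1, h2⟩
      | none =>
        rw [hf] at hp
        exact ih (n+1) _ hrest'
          (fun p hp => ⟨by have := (H1 p hp).1; omega, (H1 p hp).2⟩) H2 p hp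
          k c s hk ((avail_server_none hn).1 hav) hws hR

theorem fcfs_greedy2 : ∀ (rest : List (C ⊕ S)) (n : ℕ) (q : List (ℕ × C)),
    (∀ i, rest[i]? = w[n+i]?) →
    (∀ p ∈ q, p.1 < n ∧ w[p.1]? = some (Sum.inl p.2)) →
    q.Pairwise (fun a b => a.1 < b.1) →
    ∀ l s, n ≤ l → w[l]? = some (Sum.inr s) →
      (∀ p ∈ fcfsAux R rest n q, p.2 ≠ l) →
      ∀ k c, k < l → Avail w n q k c → R c s →
      ∃ p' ∈ fcfsAux R rest n q, p'.1 = k ∧ p'.2 < l := by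
  intro rest
  induction rest with
  | nil =>
    intro n q hrest _ _ l s hnl hws _ k c _ _ _
    exfalso
    have h := hrest (l - n)
    rw [show n + (l - n) = l by omega] at h
    rw [hws] at h
    simp at h
  | cons x rest ih =>
    intro n q hrest H1 H2 l s hnl hws hun k c hkl hav hR
    obtain ⟨hn, hrest'⟩ := hrest_shift hrest
    cases x with
    | inl c0 =>
      rw [fcfsAux] at hun ⊢
      have hln : l ≠ n := by
        intro h; subst h; rw [hn] at hws; simp at hws
      exact ih (n+1) _ hrest' (h1_cons_customer hn H1) (h2_cons_customer H1 H2)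
        l s (by omega) hws hun k c hkl ((avail_cons_customer hn).1 hav) hR
    | inr s0 =>
      rw [fcfsAux] at hun ⊢
      cases hf : q.find? (fun p => decide (R p.2 s0)) with
      | some p0 =>
        obtain ⟨hs1, hs2, hs3, hs4, hs5, hs6, hs7, hs8⟩ := server_step R s0 H2 hf
        have H1' : ∀ p ∈ q.eraseP (fun p' => decide (R p'.2 s0)),
            p.1 < n + 1 ∧ w[p.1]? = some (Sum.inl p.2) := by
          intro p hp
          exact ⟨by have := (H1 p (hs3 p hp)).1; omega, (H1 p (hs3 p hp)).2⟩
        rw [hf] at hun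
        have hln : l ≠ n := by
          intro h; subst h
          exact hun (p0.1, l) (by simp) rfl
        rcases (avail_server_found hn hs3 hs4 hs1).1 hav with he | hav'
        · exact ⟨(p0.1, n), by simp, by rw [← he], by omega⟩
        · obtain ⟨p', hp', h1, h2⟩ := ih (n+1) _ hrest' H1' hs5 l s (by omega) hws
            (fun p hp => hun p (List.mem_cons_of_mem _ hp)) k c hkl hav' hR
          exact ⟨p', List.mem_cons_of_mem _ hp', h1, h2⟩
      | none =>
        rw [hf] at hun
        have hfn := List.find?_eq_none.1 hf
        by_cases hln : l = n
        · exfalso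
          subst hln
          have hs : s = s0 := by
            have : w[l]? = some (Sum.inr s0) := hn
            rw [hws] at this; simpa using this
          subst hs
          rcases hav with hmem | ⟨hge, _⟩
          · have := hfn _ hmem
            simp at this
            exact this hR
          · omega
        · exact ih (n+1) _ hrest'
            (fun p hp => ⟨by have := (H1 p hp).1; omega, (H1 p hp).2⟩) H2
            l s (by omega) hws hun k c hkl ((avail_server_none hn).1 hav) hR

theorem fcfs_count : ∀ (rest : List (C ⊕ S)) (n : ℕ) (q : List (ℕ × C)),
    (∀ i, rest[i]? = w[n+i]?) →
    (∀ p ∈ q, p.1 < n ∧ w[p.1]? = some (Sum.inl p.2)) →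
    q.Pairwise (fun a b => a.1 < b.1) →
    (fcfsAux R rest n q).length = q.length + numC rest →
    ∀ k c, Avail w n q k c → ∃ p ∈ fcfsAux R rest n q, p.1 = k := by
  intro rest
  induction rest with
  | nil =>
    intro n q hrest _ _ hlen k c hav
    exfalso
    simp [fcfsAux, numC] at hlen
    rcases hav with hmem | ⟨hge, hw⟩
    · rw [List.length_eq_zero_iff.1 hlen.symm] at hmem; simp at hmem
    · have h := hrest (k - n)
      rw [show n + (k - n) = k by omega, hw] at h
      simp at h
  | cons x rest ih =>
    intro n q hrest H1 H2 hlen k c hav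
    obtain ⟨hn, hrest'⟩ := hrest_shift hrest
    cases x with
    | inl c0 =>
      rw [fcfsAux] at hlen ⊢
      have hlen' : (fcfsAux R rest (n+1) (q ++ [(n, c0)])).length
          = (q ++ [(n, c0)]).length + numC rest := by
        simp only [numC, List.countP_cons] at hlen ⊢
        simp only [List.length_append, List.length_singleton]
        simp at hlen
        omega
      exact ih (n+1) _ hrest' (h1_cons_customer hn H1) (h2_cons_customer H1 H2) hlen'
        k c ((avail_cons_customer hn).1 hav)
    | inr s0 =>
      rw [fcfsAux] at hlen ⊢
      cases hf : q.find? (fun p => decide (R p.2 s0)) with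
      | some p0 =>
        obtain ⟨hs1, hs2, hs3, hs4, hs5, hs6, hs7, hs8⟩ := server_step R s0 H2 hf
        have H1' : ∀ p ∈ q.eraseP (fun p' => decide (R p'.2 s0)),
            p.1 < n + 1 ∧ w[p.1]? = some (Sum.inl p.2) := by
          intro p hp
          exact ⟨by have := (H1 p (hs3 p hp)).1; omega, (H1 p (hs3 p hp)).2⟩
        rw [hf] at hlen
        have hlen' : (fcfsAux R rest (n+1) (q.eraseP (fun p' => decide (R p'.2 s0)))).length
            = (q.eraseP (fun p' => decide (R p'.2 s0))).length + numC rest := by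
          simp [numC, List.countP_cons] at hlen ⊢
          omega
        rcases (avail_server_found hn hs3 hs4 hs1).1 hav with he | hav'
        · exact ⟨(p0.1, n), by simp, by rw [← he]⟩
        · obtain ⟨p', hp', h1⟩ := ih (n+1) _ hrest' H1' hs5 hlen' k c hav'
          exact ⟨p', List.mem_cons_of_mem _ hp', h1⟩
      | none =>
        rw [hf] at hlen
        have hlen' : (fcfsAux R rest (n+1) q).length = q.length + numC rest := by
          simp [numC, List.countP_cons] at hlen ⊢
          omega
        exact ih (n+1) _ hrest'
          (fun p hp => ⟨by have := (H1 p hp).1; omega, (H1 p hp).2⟩) H2 hlen'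
          k c ((avail_server_none hn).1 hav)

structure FSpec (R : C → S → Prop) [∀ c s, Decidable (R c s)] (w : List (C ⊕ S))
    (M : List (ℕ × ℕ)) : Prop where
  valid : ∀ p ∈ M, p.1 < p.2 ∧ ∃ c s, w[p.1]? = some (Sum.inl c) ∧
    w[p.2]? = some (Sum.inr s) ∧ R c s
  inj1 : ∀ p ∈ M, ∀ p' ∈ M, p.1 = p'.1 → p = p'
  greedy1 : ∀ p ∈ M, ∀ k c s, k < p.1 → w[k]? = some (Sum.inl c) →
    w[p.2]? = some (Sum.inr s) → R c s → ∃ p' ∈ M, p'.1 = k ∧ p'.2 < p.2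
  greedy2 : ∀ l s, w[l]? = some (Sum.inr s) → (∀ p ∈ M, p.2 ≠ l) →
    ∀ k c, k < l → w[k]? = some (Sum.inl c) → R c s → ∃ p' ∈ M, p'.1 = k ∧ p'.2 < l

theorem avail_zero {k : ℕ} {c : C} : Avail w 0 ([] : List (ℕ × C)) k c ↔
    w[k]? = some (Sum.inl c) := by
  simp [Avail]

theorem fcfsMatching_fspec (w : List (C ⊕ S)) : FSpec R w (fcfsMatching R w) := by
  have hrest : ∀ i, w[i]? = w[0+i]? := by simp
  have H1 : ∀ p ∈ ([] : List (ℕ × C)), p.1 < 0 ∧ w[p.1]? = some (Sum.inl p.2) := by simp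
  have H2 : ([] : List (ℕ × C)).Pairwise (fun a b => a.1 < b.1) := by simp
  constructor
  · intro p hp
    obtain ⟨h1, c, s, h2, h3, h4, _⟩ := fcfs_valid R w 0 [] hrest H1 H2 p hp
    exact ⟨h1, c, s, h2, h3, h4⟩
  · exact pairwise_fst_inj (fcfs_pairwise_fst R w 0 [] hrest H1 H2)
  · intro p hp k c s hk hc hs hR
    exact fcfs_greedy1 R w 0 [] hrest H1 H2 p hp k c s hk (avail_zero.2 hc) hs hR
  · intro l s hl hun k c hk hc hR
    exact fcfs_greedy2 R w 0 [] hrest H1 H2 l s (Nat.zero_le _) hl hun k c hk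
      (avail_zero.2 hc) hR

theorem fspec_unique_aux {M₁ M₂ : List (ℕ × ℕ)}
    (h₁ : FSpec R w M₁) (h₂ : FSpec R w M₂) (l : ℕ)
    (IH : ∀ l' < l, ∀ k, ((k, l') ∈ M₁ ↔ (k, l') ∈ M₂)) :
    ∀ k, (k, l) ∈ M₁ → (k, l) ∈ M₂ := by
  intro k hk
  obtain ⟨hlt, c, s, hc, hs, hR⟩ := h₁.valid _ hk
  rcases Classical.em (∃ k₂, (k₂, l) ∈ M₂) with ⟨k₂, hk₂⟩ | hne
  · obtain ⟨hlt₂, c₂, s₂, hc₂, hs₂, hR₂⟩ := h₂.valid _ hk₂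
    have hss : s₂ = s := by rw [hs] at hs₂; exact (by simpa using hs₂ : s = s₂).symm
    subst hss
    rcases lt_trichotomy k₂ k with h | rfl | h
    · exfalso
      obtain ⟨p', hp', hp1, hp2⟩ := h₁.greedy1 _ hk k₂ c₂ s₂ h hc₂ hs hR₂
      have hp'eq : p' = (k₂, p'.2) := by rw [← hp1]
      rw [hp'eq] at hp'
      have := (IH p'.2 (by omega) k₂).1 hp'
      have := h₂.inj1 _ this _ hk₂ rfl
      simp at this
      omega
    · exact hk₂
    · exfalso
      obtain ⟨p', hp', hp1, hp2⟩ := h₂.greedy1 _ hk₂ k c s₂ h hc hs₂ hR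
      have hp'eq : p' = (k, p'.2) := by rw [← hp1]
      rw [hp'eq] at hp'
      have := (IH p'.2 (by omega) k).2 hp'
      have := h₁.inj1 _ this _ hk rfl
      simp at this
      omega
  · exfalso
    have hun : ∀ p ∈ M₂, p.2 ≠ l := by
      intro p hp he
      exact hne ⟨p.1, by rw [← he]; exact hp⟩
    obtain ⟨p', hp', hp1, hp2⟩ := h₂.greedy2 l s hs hun k c hlt hc hR
    have hp'eq : p' = (k, p'.2) := by rw [← hp1]
    rw [hp'eq] at hp'
    have := (IH p'.2 (by omega) k).2 hp'
    have := h₁.inj1 _ this _ hk rfl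
    simp at this
    omega

theorem fspec_unique {M₁ M₂ : List (ℕ × ℕ)}
    (h₁ : FSpec R w M₁) (h₂ : FSpec R w M₂) :
    ∀ p, p ∈ M₁ ↔ p ∈ M₂ := by
  suffices H : ∀ l k, ((k, l) ∈ M₁ ↔ (k, l) ∈ M₂) by
    intro p
    have := H p.2 p.1
    simpa using this
  intro l
  induction l using Nat.strong_induction_on with
  | _ l IH =>
    intro k
    constructor
    · exact fspec_unique_aux R h₁ h₂ l (fun l' hl' k' => IH l' hl' k') k
    · exact fspec_unique_aux R h₂ h₁ l (fun l' hl' k' => (IH l' hl' k').symm) k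

def exchFun {C S : Type*} (R : C → S → Prop) [∀ c s, Decidable (R c s)] [Inhabited C]
    (w : List (C ⊕ S)) : ℕ → C ⊕ S := fun k =>
  match (fcfsMatching R w).find? (fun p => p.1 == k) with
  | some p => w.getD p.2 (Sum.inl default)
  | none =>
    match (fcfsMatching R w).find? (fun p => p.2 == k) with
    | some p => w.getD p.1 (Sum.inl default)
    | none => w.getD k (Sum.inl default)

theorem exchange_eq_map {C S : Type*} (R : C → S → Prop) [∀ c s, Decidable (R c s)]
    [Inhabited C] (w : List (C ⊕ S)) :
    exchange R w = (List.range w.length).map (exchFun R w) := rfl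

variable [Inhabited C]

theorem exchange_length : (exchange R w).length = w.length := by
  rw [exchange_eq_map]; simp

theorem exchange_getElem? {k : ℕ} (hk : k < w.length) :
    (exchange R w)[k]? = some (exchFun R w k) := by
  rw [exchange_eq_map, List.getElem?_map, List.getElem?_range hk]
  rfl

theorem M_fspec (w : List (C ⊕ S)) : FSpec R w (fcfsMatching R w) :=
  fcfsMatching_fspec R w

theorem M_pairwise_snd (w : List (C ⊕ S)) :
    (fcfsMatching R w).Pairwise (fun a b => a.2 < b.2) :=
  fcfs_pairwise_snd R w 0 []

theorem M_inj2 (w : List (C ⊕ S)) :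
    ∀ p ∈ fcfsMatching R w, ∀ p' ∈ fcfsMatching R w, p.2 = p'.2 → p = p' :=
  pairwise_snd_inj ((M_pairwise_snd R w).imp (fun h => Nat.ne_of_lt h))

theorem exchange_pair {k l : ℕ} (hp : (k, l) ∈ fcfsMatching R w) :
    ∃ c s, w[k]? = some (Sum.inl c) ∧ w[l]? = some (Sum.inr s) ∧ R c s ∧
      k < l ∧ l < w.length ∧
      (exchange R w)[k]? = some (Sum.inr s) ∧ (exchange R w)[l]? = some (Sum.inl c) := by
  obtain ⟨hlt, c, s, hc, hs, hR⟩ := (M_fspec R w).valid _ hp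
  simp only at hlt hc hs
  have hln : l < w.length := (List.getElem?_eq_some_iff.1 hs).1
  have hkn : k < w.length := by omega
  refine ⟨c, s, hc, hs, hR, hlt, hln, ?_, ?_⟩
  · rw [exchange_getElem? R hkn]
    have hfind : (fcfsMatching R w).find? (fun p => p.1 == k) = some (k, l) := by
      apply find?_unique' _ hp (by simp)
      intro b hb hbk
      exact (M_fspec R w).inj1 _ hb _ hp (by simpa using hbk)
    unfold exchFun
    rw [hfind]
    simp only [List.getD_eq_getElem?_getD, hs, Option.getD_some]
  · rw [exchange_getElem? R hln]
    have hfind1 : (fcfsMatching R w).find? (fun p => p.1 == l) = none := by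
      rw [List.find?_eq_none]
      intro b hb hbl
      obtain ⟨_, cb, sb, hcb, _, _⟩ := (M_fspec R w).valid _ hb
      rw [(by simpa using hbl : b.1 = l)] at hcb
      rw [hs] at hcb
      simp at hcb
    have hfind2 : (fcfsMatching R w).find? (fun p => p.2 == l) = some (k, l) := by
      apply find?_unique' _ hp (by simp)
      intro b hb hbl
      exact M_inj2 R w _ hb _ hp (by simpa using hbl)
    unfold exchFun
    rw [hfind1, hfind2]
    simp only [List.getD_eq_getElem?_getD, hc, Option.getD_some]

theorem exchange_unmatched {j : ℕ} (hj : j < w.length)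
    (h1 : ∀ p ∈ fcfsMatching R w, p.1 ≠ j) (h2 : ∀ p ∈ fcfsMatching R w, p.2 ≠ j) :
    (exchange R w)[j]? = w[j]? := by
  rw [exchange_getElem? R hj]
  have hfind1 : (fcfsMatching R w).find? (fun p => p.1 == j) = none := by
    rw [List.find?_eq_none]; intro b hb hbj
    exact h1 b hb (by simpa using hbj)
  have hfind2 : (fcfsMatching R w).find? (fun p => p.2 == j) = none := by
    rw [List.find?_eq_none]; intro b hb hbj
    exact h2 b hb (by simpa using hbj)
  unfold exchFun
  rw [hfind1, hfind2]
  rw [List.getD_eq_getElem?_getD, List.getElem?_eq_getElem hj]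
  rfl

theorem all_matched (hw : (fcfsMatching R w).length = numC w) :
    ∀ k c, w[k]? = some (Sum.inl c) → ∃ p ∈ fcfsMatching R w, p.1 = k := by
  intro k c hk
  have := fcfs_count R w 0 [] (by simp) (by simp) (by simp)
    (by simpa [numC, fcfsMatching] using hw) k c (avail_zero.2 hk)
  exact this

theorem classify_inl (hw : (fcfsMatching R w).length = numC w) {j : ℕ} {c' : C}
    (hj : (exchange R w)[j]? = some (Sum.inl c')) :
    ∃ k', (k', j) ∈ fcfsMatching R w ∧ w[k']? = some (Sum.inl c') := by
  have hjn : j < w.length := by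
    have := (List.getElem?_eq_some_iff.1 hj).1
    rwa [exchange_length] at this
  rcases Classical.em (∃ p ∈ fcfsMatching R w, p.2 = j) with ⟨p, hp, he⟩ | h2
  · have hp' : (p.1, j) ∈ fcfsMatching R w := by rw [← he]; exact hp
    obtain ⟨c, s, hc, hs, hR, hlt, hln, hek, hel⟩ := exchange_pair R hp'
    rw [hel] at hj
    have : c = c' := by simpa using hj
    exact ⟨p.1, hp', by rw [hc, this]⟩
  · rcases Classical.em (∃ p ∈ fcfsMatching R w, p.1 = j) with ⟨p, hp, he⟩ | h1
    · exfalso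
      have hp' : (j, p.2) ∈ fcfsMatching R w := by rw [← he]; exact hp
      obtain ⟨c, s, hc, hs, hR, hlt, hln, hek, hel⟩ := exchange_pair R hp'
      rw [hek] at hj
      simp at hj
    · have h1' : ∀ p ∈ fcfsMatching R w, p.1 ≠ j := fun p hp he => h1 ⟨p, hp, he⟩
      have h2' : ∀ p ∈ fcfsMatching R w, p.2 ≠ j := fun p hp he => h2 ⟨p, hp, he⟩
      rw [exchange_unmatched R hjn h1' h2'] at hj
      obtain ⟨p, hp, he⟩ := all_matched R hw j c' hj
      exact absurd he (h1' p hp)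

theorem classify_inr {j : ℕ} {s' : S} (hj : (exchange R w)[j]? = some (Sum.inr s'))
    (h1 : ∀ p ∈ fcfsMatching R w, p.1 ≠ j) :
    (∀ p ∈ fcfsMatching R w, p.2 ≠ j) ∧ w[j]? = some (Sum.inr s') := by
  have hjn : j < w.length := by
    have := (List.getElem?_eq_some_iff.1 hj).1
    rwa [exchange_length] at this
  have h2 : ∀ p ∈ fcfsMatching R w, p.2 ≠ j := by
    intro p hp he
    have hp' : (p.1, j) ∈ fcfsMatching R w := by rw [← he]; exact hp
    obtain ⟨c, s, hc, hs, hR, hlt, hln, hek, hel⟩ := exchange_pair R hp'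
    rw [hel] at hj
    simp at hj
  exact ⟨h2, by rw [← exchange_unmatched R hjn h1 h2]; exact hj⟩

theorem main_thm (w : List (C ⊕ S)) (hw : (fcfsMatching R w).length = numC w) :
    (fcfsMatching R (exchange R w).reverse).length = numC ((exchange R w).reverse) ∧
    ∀ a b : ℕ, ((a, b) ∈ fcfsMatching R (exchange R w).reverse ↔
      ∃ p ∈ fcfsMatching R w,
        a = w.length - 1 - p.2 ∧ b = w.length - 1 - p.1) := by
  classical
  set n := w.length with hn
  set M := fcfsMatching R w with hM
  set E := exchange R w with hE
  set V := E.reverse with hVdef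
  set M' := M.map (fun p => (n - 1 - p.2, n - 1 - p.1)) with hM'
  have hElen : E.length = n := exchange_length R
  have hVlen : V.length = n := by rw [hVdef, List.length_reverse, hElen]
  have hV : ∀ i, i < n → V[i]? = E[n - 1 - i]? := by
    intro i hi
    have := List.getElem?_reverse (l := E) (i := i) (by rw [hElen]; exact hi)
    rwa [hElen] at this
  have hMb : ∀ p ∈ M, p.1 < p.2 ∧ p.2 < n := by
    intro p hp
    obtain ⟨hlt, c, s, hc, hs, hR⟩ := (M_fspec R w).valid _ hp
    exact ⟨hlt, (List.getElem?_eq_some_iff.1 hs).1⟩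
  -- FSpec for M' on V
  have hspecM' : FSpec R V M' := by
    refine ⟨?_, ?_, ?_, ?_⟩
    · -- valid
      intro p' hp'
      obtain ⟨p, hp, rfl⟩ := List.mem_map.1 hp'
      obtain ⟨c, s, hc, hs, hR, hlt, hln, hek, hel⟩ := exchange_pair R hp
      have hb := hMb p hp
      refine ⟨by simp only; omega, c, s, ?_, ?_, hR⟩
      · show V[n - 1 - p.2]? = some (Sum.inl c)
        rw [hV _ (by omega), show n - 1 - (n - 1 - p.2) = p.2 by omega]
        exact hel
      · show V[n - 1 - p.1]? = some (Sum.inr s)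
        rw [hV _ (by omega), show n - 1 - (n - 1 - p.1) = p.1 by omega]
        exact hek
    · -- inj1
      intro p' hp' q' hq' he
      obtain ⟨p, hp, rfl⟩ := List.mem_map.1 hp'
      obtain ⟨q, hq, rfl⟩ := List.mem_map.1 hq'
      have hbp := hMb p hp
      have hbq := hMb q hq
      simp only at he
      have : p.2 = q.2 := by omega
      have := M_inj2 R w p hp q hq this
      rw [this]
    · -- greedy1
      intro p' hp' a c₁ s₁ ha hca hsa hR₁
      obtain ⟨p, hp, rfl⟩ := List.mem_map.1 hp'
      obtain ⟨c, s, hc, hs, hR, hlt, hln, hek, hel⟩ := exchange_pair R hp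
      have hbp := hMb p hp
      have han : a < n := by
        have := (List.getElem?_eq_some_iff.1 hca).1
        rwa [hVlen] at this
      have hEj : E[n - 1 - a]? = some (Sum.inl c₁) := by
        rw [← hV a han]; exact hca
      obtain ⟨k', hk'm, hk'c⟩ := classify_inl R hw hEj
      have hbk' := hMb _ hk'm
      simp only at hbk' ha
      have hsv : s₁ = s := by
        have h2 : V[n - 1 - p.1]? = some (Sum.inr s) := by
          rw [hV _ (by omega), show n - 1 - (n - 1 - p.1) = p.1 by omega]
          exact hek
        rw [h2] at hsa
        simpa using hsa.symm
      rw [hsv] at hR₁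
      have hja : p.2 < n - 1 - a := by omega
      have hgt : p.1 < k' := by
        rcases lt_trichotomy k' p.1 with h | h | h
        · exfalso
          obtain ⟨p'', hp''m, h1, h2⟩ := (M_fspec R w).greedy1 p hp k' c₁ s h hk'c hs hR₁
          have he'' : p'' = (k', n - 1 - a) :=
            (M_fspec R w).inj1 _ hp''m _ hk'm (by rw [h1])
          rw [he''] at h2
          simp only at h2
          omega
        · exfalso
          have he'' : (k', n - 1 - a) = p :=
            (M_fspec R w).inj1 _ hk'm _ hp (by simpa using h)
          have := congrArg Prod.snd he''
          simp only at this
          omega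
        · exact h
      refine ⟨(n - 1 - (n - 1 - a), n - 1 - k'), List.mem_map.2 ⟨(k', n - 1 - a), hk'm, rfl⟩,
        by simp only; omega, by simp only; omega⟩
    · -- greedy2
      intro l₀ s₁ hl₀ hun k₁ c₁ hk₁ hc₁ hR₁
      have hl₀n : l₀ < n := by
        have := (List.getElem?_eq_some_iff.1 hl₀).1
        rwa [hVlen] at this
      have hEj : E[n - 1 - l₀]? = some (Sum.inr s₁) := by
        rw [← hV _ hl₀n]; exact hl₀
      have h1 : ∀ p ∈ M, p.1 ≠ n - 1 - l₀ := by
        intro p hp he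
        have hb := hMb p hp
        have : (n - 1 - p.2, n - 1 - p.1) ∈ M' := List.mem_map.2 ⟨p, hp, rfl⟩
        have h2 := hun _ this
        simp only at h2
        omega
      obtain ⟨h2, hwj⟩ := classify_inr R hEj h1
      have hk₁n : k₁ < n := by
        have := (List.getElem?_eq_some_iff.1 hc₁).1
        rwa [hVlen] at this
      have hEk : E[n - 1 - k₁]? = some (Sum.inl c₁) := by
        rw [← hV _ hk₁n]; exact hc₁
      obtain ⟨k'', hk''m, hk''c⟩ := classify_inl R hw hEk
      have hbk'' := hMb _ hk''m
      simp only at hbk''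
      have hgt : n - 1 - l₀ < k'' := by
        rcases lt_trichotomy k'' (n - 1 - l₀) with h | h | h
        · exfalso
          obtain ⟨p'', hp''m, hq1, hq2⟩ :=
            (M_fspec R w).greedy2 (n - 1 - l₀) s₁ hwj h2 k'' c₁ h hk''c hR₁
          have he'' : p'' = (k'', n - 1 - k₁) :=
            (M_fspec R w).inj1 _ hp''m _ hk''m (by rw [hq1])
          rw [he''] at hq2
          simp only at hq2
          omega
        · exfalso
          rw [h] at hk''c
          rw [hwj] at hk''c
          simp at hk''c
        · exact h
      refine ⟨(n - 1 - (n - 1 - k₁), n - 1 - k''), List.mem_map.2 ⟨(k'', n - 1 - k₁), hk''m, rfl⟩,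
        by simp only; omega, by simp only; omega⟩
  -- uniqueness
  have hiff : ∀ p, p ∈ fcfsMatching R V ↔ p ∈ M' :=
    fspec_unique R (M_fspec R V) hspecM'
  -- lengths
  have hndV : (fcfsMatching R V).Nodup :=
    (M_pairwise_snd R V).imp (fun {a b} h => by intro he; rw [he] at h; omega)
  have hsndlt := M_pairwise_snd R w
  have hndM' : M'.Nodup := by
    have h1 : M.Pairwise (fun p q => ((n - 1 - p.2, n - 1 - p.1) : ℕ × ℕ) ≠
        (n - 1 - q.2, n - 1 - q.1)) := by
      refine hsndlt.imp_of_mem ?_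
      intro a b ha hb hlt
      have h2a := (hMb a ha).2
      have h2b := (hMb b hb).2
      intro he
      have := congrArg Prod.fst he
      simp only at this
      omega
    exact (List.pairwise_map).2 h1
  have hTF : (fcfsMatching R V).toFinset = M'.toFinset := by
    ext p
    simp only [List.mem_toFinset]
    exact hiff p
  have hlen1 : (fcfsMatching R V).length = M'.length := by
    rw [← List.toFinset_card_of_nodup hndV, ← List.toFinset_card_of_nodup hndM', hTF]
  have hlen2 : M'.length = M.length := List.length_map _
  -- numC V = M.length
  have hT : (M.map (fun p => p.2)).Nodup :=
    (List.pairwise_map).2 (hsndlt.imp (fun {a b} h => Nat.ne_of_lt h))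
  have hmemT : ∀ j, j ∈ M.map (fun p => p.2) ↔
      (j < n ∧ (exchFun R w j).isLeft = true) := by
    intro j
    constructor
    · intro hj
      obtain ⟨p, hp, rfl⟩ := List.mem_map.1 hj
      have hp' : (p.1, p.2) ∈ M := hp
      obtain ⟨c, s, hc, hs, hR, hlt, hln, hek, hel⟩ := exchange_pair R hp'
      have hgl : E[p.2]? = some (exchFun R w p.2) := exchange_getElem? R (by omega)
      rw [hgl] at hel
      refine ⟨(hMb p hp).2, ?_⟩
      have hfe : exchFun R w p.2 = Sum.inl c := by
        have : some (exchFun R w p.2) = some (Sum.inl c) := hel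
        simpa using this
      rw [hfe]
      simp
    · rintro ⟨hjn, hleft⟩
      obtain ⟨c', hc'⟩ := Sum.isLeft_iff.1 hleft
      have hgl : E[j]? = some (Sum.inl c') := by
        rw [exchange_getElem? R (show j < w.length from hjn), hc']
      obtain ⟨k', hk'm, _⟩ := classify_inl R hw hgl
      exact List.mem_map.2 ⟨(k', j), hk'm, rfl⟩
  have hcount : numC V = M.length := by
    rw [hVdef]
    show (E.reverse).countP (fun z => z.isLeft) = M.length
    rw [List.countP_reverse, hE, exchange_eq_map, List.countP_map]
    rw [List.countP_eq_length_filter]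
    have hndf : ((List.range n).filter
        (fun j => ((fun z : C ⊕ S => z.isLeft) ∘ exchFun R w) j)).Nodup :=
      (List.nodup_range (n := n)).filter _
    have : ((List.range n).filter
        (fun j => ((fun z : C ⊕ S => z.isLeft) ∘ exchFun R w) j)).toFinset
        = (M.map (fun p => p.2)).toFinset := by
      ext j
      simp only [List.mem_toFinset, List.mem_filter, List.mem_range, Function.comp]
      rw [hmemT j]
    calc ((List.range n).filter _).length
        = ((List.range n).filter _).toFinset.card := (List.toFinset_card_of_nodup hndf).symm
      _ = (M.map (fun p => p.2)).toFinset.card := by rw [this]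
      _ = (M.map (fun p => p.2)).length := List.toFinset_card_of_nodup hT
      _ = M.length := List.length_map _
  constructor
  · rw [hlen1, hlen2, hcount]
  · intro a b
    rw [hiff (a, b)]
    constructor
    · intro h
      obtain ⟨p, hp, he⟩ := List.mem_map.1 h
      have h1 := congrArg Prod.fst he
      have h2 := congrArg Prod.snd he
      simp only at h1 h2
      exact ⟨p, hp, h1.symm, h2.symm⟩
    · rintro ⟨p, hp, ha, hb⟩
      exact List.mem_map.2 ⟨p, hp, by rw [ha, hb]⟩

end Stmt11Aux

/-- Time reversal of perfect blocks: if `w` is a perfect block, then the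
reversal of its exchange transformation is also a perfect block, and its FCFS directed
matching consists exactly of the original matched pairs with positions exchanged and
order reversed: `(k,l)` is a matched pair of `w` iff `(n−1−l, n−1−k)` is a matched pair
of the reversed exchanged word (`n` = length of `w`). -/
theorem stmt11 {C S : Type*} [Fintype C] [Fintype S] [Nonempty C] [Nonempty S]
    [Inhabited C]
    (R : C → S → Prop) [∀ c s, Decidable (R c s)]
    (w : List (C ⊕ S)) (hw : IsPerfect R w) :
    IsPerfect R (exchange R w).reverse ∧
    ∀ a b : ℕ, ((a, b) ∈ fcfsMatching R (exchange R w).reverse ↔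
      ∃ p ∈ fcfsMatching R w,
        a = w.length - 1 - p.2 ∧ b = w.length - 1 - p.1) := by
  have h := main_thm R w hw
  exact ⟨h.1, h.2⟩
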